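/- Let A be a positive noncompact operator on a separable Hilbert space with essential norm ‖A‖_e, and let ξ be a sequence with 0 ≤ ξ_j ≤ ‖A‖_e and ξ_j < ‖A‖ for all j. Then there exist rank-one projections P_j such that ∑_{j=1}^∞ ξ_j P_j ≤ A, the series converging in the strong operator topology. -/

import Mathlib

open scoped BigOperators
open Filter Topology ContinuousLinearMap

variable {H : Type*} [NormedAddCommGroup H] [InnerProductSpace ℂ H]

/-- The rank-one operator `x ↦ ⟪v, x⟫ • v`. -/
noncomputable def rankOneProj (v : H) : H →L[ℂ] H := (innerSL ℂ v).smulRight v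

/-- A rank-one (orthogonal) projection: `v ⊗ v` for a unit vector `v`. -/
def IsRankOneProjection (P : H →L[ℂ] H) : Prop := ∃ v : H, ‖v‖ = 1 ∧ P = rankOneProj v

/-- The essential norm of `A`: the distance from `A` to the compact operators,
i.e. the norm of the image of `A` in the Calkin algebra. -/
noncomputable def essNorm (A : H →L[ℂ] H) : ℝ :=
  sInf {r : ℝ | ∃ K : H →L[ℂ] H, IsCompactOperator K ∧ r = ‖A - K‖}

set_option linter.unusedSectionVars false
set_option linter.unusedVariables false
set_option maxHeartbeats 2000000

local notation "⟪" x ", " y "⟫" => @inner ℂ _ _ x y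

lemma rankOneProj_apply (v x : H) : rankOneProj v x = ⟪v, x⟫ • v := rfl

lemma coe_smul_eq (r : ℝ) (y : H) : (r : ℂ) • y = r • y := by
  rw [show ((r:ℂ)) = r • (1:ℂ) by simp, smul_assoc, one_smul]

lemma re_real_mul (r : ℝ) (z : ℂ) : RCLike.re ((r:ℂ) * z) = r * RCLike.re z :=
  RCLike.re_ofReal_mul r z

lemma rankOneProj_symm (v : H) (x y : H) : ⟪rankOneProj v x, y⟫ = ⟪x, rankOneProj v y⟫ := by
  simp only [rankOneProj_apply, inner_smul_left, inner_smul_right]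
  rw [← inner_conj_symm v x]
  ring_nf
  rw [mul_comm]
  simp

lemma rankOneProj_form (w x : H) : RCLike.re ⟪x, rankOneProj w x⟫ = ‖⟪w, x⟫‖ ^ 2 := by
  have h : ⟪x, rankOneProj w x⟫ = ((‖⟪w,x⟫‖^2 : ℝ) : ℂ) := by
    rw [rankOneProj_apply, inner_smul_right, ← inner_conj_symm x w, RCLike.mul_conj]
    norm_cast
  rw [h]
  simp [← Complex.ofReal_pow]

lemma smul_form (c : ℝ) (T : H →L[ℂ] H) (x : H) :
    RCLike.re ⟪x, (c • T) x⟫ = c * RCLike.re ⟪x, T x⟫ := by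
  rw [ContinuousLinearMap.smul_apply, ← coe_smul_eq, inner_smul_right]
  exact RCLike.re_ofReal_mul _ _


lemma isCompactOperator_fd {W : Type*} [NormedAddCommGroup W] [NormedSpace ℂ W]
    [FiniteDimensional ℂ W] (g : W →L[ℂ] H) (h : H →L[ℂ] W) :
    IsCompactOperator (fun x : H => g (h x)) := by
  refine ⟨g '' Metric.closedBall 0 (‖h‖ + 1), (isCompact_closedBall _ _).image g.continuous, ?_⟩
  have hs : Metric.closedBall (0:H) 1 ⊆
      (fun x : H => g (h x)) ⁻¹' (g '' Metric.closedBall 0 (‖h‖ + 1)) := by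
    intro x hx
    refine ⟨h x, ?_, rfl⟩
    simp only [Metric.mem_closedBall, dist_zero_right] at hx ⊢
    calc ‖h x‖ ≤ ‖h‖ * ‖x‖ := h.le_opNorm x
      _ ≤ ‖h‖ + 1 := by nlinarith [norm_nonneg h]
  exact Filter.mem_of_superset (Metric.closedBall_mem_nhds 0 one_pos) hs

lemma rankOneProj_compact (v : H) : IsCompactOperator (⇑(rankOneProj v)) :=
  isCompactOperator_fd (H := H) (ContinuousLinearMap.toSpanSingleton ℂ v) (innerSL ℂ v)

lemma essNorm_nonneg (A : H →L[ℂ] H) : 0 ≤ essNorm A :=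
  Real.sInf_nonneg (fun r ⟨_, _, hr⟩ => hr ▸ norm_nonneg _)

lemma essNorm_le (A : H →L[ℂ] H) {K : H →L[ℂ] H} (hK : IsCompactOperator K) :
    essNorm A ≤ ‖A - K‖ :=
  csInf_le ⟨0, fun _ ⟨_, _, hr⟩ => hr ▸ norm_nonneg _⟩ ⟨K, hK, rfl⟩

lemma essNorm_le_norm (A : H →L[ℂ] H) : essNorm A ≤ ‖A‖ := by
  simpa using essNorm_le A (K := 0) isCompactOperator_zero




section aux
variable [CompleteSpace H]

lemma essNorm_pos (A : H →L[ℂ] H) (hnc : ¬ IsCompactOperator (⇑A)) : 0 < essNorm A := by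
  rcases lt_or_eq_of_le (essNorm_nonneg A) with h | h
  · exact h
  exfalso
  apply hnc
  have key : ∀ n : ℕ, ∃ K : H →L[ℂ] H, IsCompactOperator (⇑K) ∧ ‖A - K‖ < 1/(n+1) := by
    intro n
    have hlt : essNorm A < 1/((n:ℝ)+1) := by rw [← h]; positivity
    obtain ⟨r, hr, hrlt⟩ := exists_lt_of_csInf_lt
      (⟨‖A - 0‖, 0, isCompactOperator_zero, rfl⟩ :
        Set.Nonempty {r : ℝ | ∃ K : H →L[ℂ] H, IsCompactOperator K ∧ r = ‖A - K‖}) hlt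
    obtain ⟨K, hK, hrK⟩ := hr
    exact ⟨K, hK, hrK ▸ hrlt⟩
  choose K hKc hKlt using key
  have htend : Tendsto K atTop (nhds A) := by
    rw [tendsto_iff_norm_sub_tendsto_zero]
    refine squeeze_zero (fun n => norm_nonneg _) (fun n => ?_)
      tendsto_one_div_add_atTop_nhds_zero_nat
    rw [norm_sub_rev]
    exact (hKlt n).le
  exact isCompactOperator_of_tendsto htend (Eventually.of_forall hKc)

lemma pos_cs {T : H →L[ℂ] H} (hT : T.IsPositive) (x y : H) :
    ‖⟪x, T y⟫‖ ^ 2 ≤ RCLike.re ⟪x, T x⟫ * RCLike.re ⟪y, T y⟫ := by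
  obtain ⟨S, hS, hSS⟩ : ∃ S : H →L[ℂ] H, IsSelfAdjoint S ∧ S * S = T :=
    ⟨CFC.sqrt T, IsSelfAdjoint.of_nonneg (CFC.sqrt_nonneg T),
      CFC.sqrt_mul_sqrt_self T ((nonneg_iff_isPositive T).2 hT)⟩
  have key : ∀ z w : H, ⟪z, T w⟫ = ⟪S z, S w⟫ := by
    intro z w
    rw [← hSS, ContinuousLinearMap.mul_apply, ← ContinuousLinearMap.adjoint_inner_left, hS.adjoint_eq]
  rw [key x y, key x x, key y y, inner_self_eq_norm_sq, inner_self_eq_norm_sq]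
  calc ‖⟪S x, S y⟫‖ ^ 2 ≤ (‖S x‖ * ‖S y‖) ^ 2 := by
        have := norm_inner_le_norm (𝕜 := ℂ) (S x) (S y)
        nlinarith [norm_nonneg ⟪S x, S y⟫]
    _ = ‖S x‖ ^ 2 * ‖S y‖ ^ 2 := by ring

lemma form_nonneg {T : H →L[ℂ] H} (hT : T.IsPositive) (x : H) :
    0 ≤ RCLike.re ⟪x, T x⟫ := hT.re_inner_nonneg_right x

lemma form_le_norm (T : H →L[ℂ] H) (x : H) :
    RCLike.re ⟪x, T x⟫ ≤ ‖T‖ * ‖x‖ ^ 2 := by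
  calc RCLike.re ⟪x, T x⟫ ≤ ‖⟪x, T x⟫‖ := RCLike.re_le_norm _
    _ ≤ ‖x‖ * ‖T x‖ := norm_inner_le_norm _ _
    _ ≤ ‖x‖ * (‖T‖ * ‖x‖) := by
        have := T.le_opNorm x
        have := norm_nonneg x
        nlinarith
    _ = ‖T‖ * ‖x‖ ^ 2 := by ring

lemma norm_le_of_form {T : H →L[ℂ] H} (hT : T.IsPositive) {c : ℝ} (hc : 0 ≤ c)
    (h : ∀ x, RCLike.re ⟪x, T x⟫ ≤ c * ‖x‖ ^ 2) : ‖T‖ ≤ c := by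
  refine T.opNorm_le_bound hc (fun x => ?_)
  rcases eq_or_ne (T x) 0 with h0 | h0
  · rw [h0, norm_zero]; positivity
  · have h1 := pos_cs hT (T x) x
    have h2 : ‖⟪T x, T x⟫‖ = ‖T x‖ ^ 2 := by
      rw [inner_self_eq_norm_sq_to_K]
      simp [← Complex.ofReal_pow]
    have h3 := h (T x)
    have h4 := h x
    have h5 : 0 ≤ RCLike.re ⟪T x, T (T x)⟫ := form_nonneg hT (T x)
    have h6 : (0:ℝ) < ‖T x‖ := norm_pos_iff.2 h0
    -- ‖Tx‖^4 ≤ (c ‖Tx‖^2) (c ‖x‖^2)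
    have h7 : ‖T x‖ ^ 4 ≤ c ^ 2 * (‖T x‖ ^ 2 * ‖x‖ ^ 2) := by
      have := pos_cs hT (T x) x
      rw [h2] at this
      nlinarith [form_nonneg hT x]
    have h10 : ‖T x‖^2 * ‖T x‖^2 ≤ (c^2 * ‖x‖^2) * ‖T x‖^2 := by nlinarith
    have h11 : ‖T x‖^2 ≤ (c*‖x‖)^2 := by
      have := (mul_le_mul_iff_of_pos_right (by positivity : (0:ℝ) < ‖T x‖^2)).mp h10
      nlinarith [this]
    nlinarith [h11, mul_nonneg hc (norm_nonneg x), h6]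

lemma norm_sq_apply_le {T : H →L[ℂ] H} (hT : T.IsPositive) (x : H) :
    ‖T x‖ ^ 2 ≤ ‖T‖ * RCLike.re ⟪x, T x⟫ := by
  rcases eq_or_ne (T x) 0 with h0 | h0
  · rw [h0]; simp
  · have h1 := pos_cs hT (T x) x
    have h2 : ‖⟪T x, T x⟫‖ = ‖T x‖ ^ 2 := by
      rw [inner_self_eq_norm_sq_to_K]; simp [← Complex.ofReal_pow]
    rw [h2] at h1
    have h6 : (0:ℝ) < ‖T x‖ := norm_pos_iff.2 h0
    have h7 : RCLike.re ⟪T x, T (T x)⟫ ≤ ‖T‖ * ‖T x‖ ^ 2 := form_le_norm T (T x)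
    have h8 : 0 ≤ RCLike.re ⟪x, T x⟫ := form_nonneg hT x
    have h9 : 0 ≤ ‖T‖ := norm_nonneg T
    have h10 : ‖T x‖^2 * ‖T x‖^2 ≤ (‖T‖ * RCLike.re ⟪x, T x⟫) * ‖T x‖^2 := by nlinarith
    exact (mul_le_mul_iff_of_pos_right (by positivity : (0:ℝ) < ‖T x‖^2)).mp h10


lemma rankOneProj_selfAdjoint (v : H) : IsSelfAdjoint (rankOneProj v) := by
  rw [isSelfAdjoint_iff_isSymmetric]
  exact fun x y => rankOneProj_symm v x y

lemma smul_selfAdjoint {c : ℝ} {T : H →L[ℂ] H} (hT : IsSelfAdjoint T) :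
    IsSelfAdjoint (c • T) := by
  rw [isSelfAdjoint_iff_isSymmetric] at *
  intro x y
  have hs := hT x y
  simp only [ContinuousLinearMap.coe_coe, ContinuousLinearMap.coe_smul,
    LinearMap.smul_apply] at *
  rw [← coe_smul_eq, ← coe_smul_eq, inner_smul_left, inner_smul_right, Complex.conj_ofReal, hs]

lemma smul_rankOneProj_isPositive {c : ℝ} (hc : 0 ≤ c) (w : H) :
    (c • rankOneProj w).IsPositive := by
  refine ⟨isSelfAdjoint_iff_isSymmetric.1 (smul_selfAdjoint (rankOneProj_selfAdjoint w)), fun x => ?_⟩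
  rw [reApplyInnerSelf, inner_re_symm, smul_form, rankOneProj_form]
  positivity

/-- On the orthogonal complement of any finite-dimensional subspace, a compact
perturbation of `A` almost attains the essential norm of `A`. -/
lemma exists_unit_perp (A T : H →L[ℂ] H) (hcpt : IsCompactOperator (⇑(A - T)))
    (S : Submodule ℂ H) [FiniteDimensional ℂ S] {ε : ℝ} (hε : 0 < ε)
    (hεm : ε ≤ essNorm A) :
    ∃ u : H, ‖u‖ = 1 ∧ u ∈ Sᗮ ∧ essNorm A - ε < ‖T u‖ := by
  by_contra hcon
  push_neg at hcon
  set m := essNorm A with hm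
  -- scaled bound on Sᗮ
  have hbound : ∀ y : H, y ∈ Sᗮ → ‖T y‖ ≤ (m - ε) * ‖y‖ := by
    intro y hy
    rcases eq_or_ne y 0 with rfl | hy0
    · simp
    · have hny : (0:ℝ) < ‖y‖ := norm_pos_iff.2 hy0
      have hu : ((‖y‖⁻¹ : ℝ) : ℂ) • y ∈ Sᗮ := Submodule.smul_mem _ _ hy
      have hnu : ‖((‖y‖⁻¹ : ℝ) : ℂ) • y‖ = 1 := by
        rw [norm_smul]
        simp [abs_of_nonneg (le_of_lt (inv_pos.2 hny)), inv_mul_cancel₀ (ne_of_gt hny)]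
      have := hcon _ hnu hu
      rw [map_smul, norm_smul] at this
      have hnc : ‖((‖y‖⁻¹ : ℝ) : ℂ)‖ = ‖y‖⁻¹ := by
        rw [Complex.norm_real]
        exact abs_of_nonneg (le_of_lt (inv_pos.2 hny))
      rw [hnc] at this
      calc ‖T y‖ = ‖y‖ * (‖y‖⁻¹ * ‖T y‖) := by field_simp
        _ ≤ ‖y‖ * (m - ε) := by
            apply mul_le_mul_of_nonneg_left _ (le_of_lt hny)
            exact this
        _ = (m - ε) * ‖y‖ := by ring
  -- the compact approximant
  have : CompleteSpace S := FiniteDimensional.complete ℂ S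
  set Pc : H →L[ℂ] H := S.subtypeL ∘L S.orthogonalProjectionOnto with hPc
  set K : H →L[ℂ] H := (A - T) + (T ∘L Pc) with hK
  have hKcpt : IsCompactOperator (⇑K) := by
    have h1 : IsCompactOperator (⇑(T ∘L Pc)) := by
      have := isCompactOperator_fd (H := H) (T ∘L S.subtypeL) S.orthogonalProjectionOnto
      exact this
    have h2 := hcpt.add h1
    exact h2
  have hub : ‖A - K‖ ≤ m - ε := by
    have hme : (0:ℝ) ≤ m - ε := by linarith
    refine opNorm_le_bound _ hme (fun x => ?_)
    have hx1 : (A - K) x = T (x - Pc x) := by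
      simp only [hK, ContinuousLinearMap.sub_apply, ContinuousLinearMap.add_apply,
        ContinuousLinearMap.comp_apply, map_sub]
      abel
    have hx2 : x - Pc x ∈ Sᗮ := S.sub_starProjection_mem_orthogonal x
    have hx3 : ‖x - Pc x‖ ≤ ‖x‖ := by
      have hp : ⟪Pc x, x - Pc x⟫ = 0 := by
        have := hx2
        rw [Submodule.mem_orthogonal] at this
        exact this (Pc x) (by simp [hPc])
      have : ‖x‖ ^ 2 = ‖Pc x‖ ^ 2 + ‖x - Pc x‖ ^ 2 := by
        have hdecomp : x = Pc x + (x - Pc x) := by abel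
        calc ‖x‖ ^ 2 = ‖Pc x + (x - Pc x)‖ ^ 2 := by rw [← hdecomp]
          _ = ‖Pc x‖ ^ 2 + 2 * RCLike.re ⟪Pc x, x - Pc x⟫ + ‖x - Pc x‖ ^ 2 :=
              norm_add_sq _ _
          _ = ‖Pc x‖ ^ 2 + ‖x - Pc x‖ ^ 2 := by rw [hp]; simp
      nlinarith [norm_nonneg x, norm_nonneg (x - Pc x), norm_nonneg (Pc x)]
    calc ‖(A - K) x‖ = ‖T (x - Pc x)‖ := by rw [hx1]
      _ ≤ (m - ε) * ‖x - Pc x‖ := hbound _ hx2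
      _ ≤ (m - ε) * ‖x‖ := mul_le_mul_of_nonneg_left hx3 hme
  have := essNorm_le A hKcpt
  rw [← hm] at this
  linarith

/-- The basic one-step domination: if `c * ⟨u,Tu⟩ ≤ ‖Tu‖²`, then
`c • (rank-one projection onto T u) ≤ T`. -/
lemma step_of_ratio {T : H →L[ℂ] H} (hT : T.IsPositive) {u : H} (hTu : T u ≠ 0)
    {c : ℝ} (hc : 0 ≤ c) (hr : c * RCLike.re ⟪u, T u⟫ ≤ ‖T u‖ ^ 2) :
    ‖((‖T u‖⁻¹ : ℝ) : ℂ) • T u‖ = 1 ∧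
      (T - c • rankOneProj (((‖T u‖⁻¹ : ℝ) : ℂ) • T u)).IsPositive := by
  have hTun : (0:ℝ) < ‖T u‖ := norm_pos_iff.2 hTu
  set w := ((‖T u‖⁻¹ : ℝ) : ℂ) • T u with hw
  have hwn : ‖w‖ = 1 := by
    rw [hw, norm_smul, Complex.norm_real, Real.norm_eq_abs, abs_of_nonneg (inv_nonneg.2 hTun.le),
      inv_mul_cancel₀ (ne_of_gt hTun)]
  refine ⟨hwn, ?_, ?_⟩
  · exact hT.1.sub (isSelfAdjoint_iff_isSymmetric.1 (smul_selfAdjoint (rankOneProj_selfAdjoint w)))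
  intro x
  rw [reApplyInnerSelf, inner_re_symm]
  have hsub : RCLike.re ⟪x, (T - c • rankOneProj w) x⟫
      = RCLike.re ⟪x, T x⟫ - c * RCLike.re ⟪x, rankOneProj w x⟫ := by
    rw [ContinuousLinearMap.sub_apply, inner_sub_right, map_sub, smul_form]
  rw [hsub, rankOneProj_form]
  -- key: c * ‖⟪w,x⟫‖² ≤ re⟪x,Tx⟫
  have hwx : ⟪w, x⟫ = ((‖T u‖⁻¹ : ℝ) : ℂ) * ⟪T u, x⟫ := by
    rw [hw, inner_smul_left, Complex.conj_ofReal]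
  have hwx2 : ‖⟪w, x⟫‖ ^ 2 = (‖T u‖⁻¹) ^ 2 * ‖⟪T u, x⟫‖ ^ 2 := by
    rw [hwx, norm_mul, Complex.norm_real, Real.norm_eq_abs, abs_of_nonneg (inv_nonneg.2 hTun.le), mul_pow]
  have hsymm : ‖⟪T u, x⟫‖ = ‖⟪x, T u⟫‖ := norm_inner_symm _ _
  have hcs : ‖⟪x, T u⟫‖ ^ 2 ≤ RCLike.re ⟪x, T x⟫ * RCLike.re ⟪u, T u⟫ := pos_cs hT x u
  have hx0 : 0 ≤ RCLike.re ⟪x, T x⟫ := hT.re_inner_nonneg_right x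
  have hu0 : 0 ≤ RCLike.re ⟪u, T u⟫ := hT.re_inner_nonneg_right u
  have key : c * ‖⟪T u, x⟫‖ ^ 2 ≤ RCLike.re ⟪x, T x⟫ * ‖T u‖ ^ 2 := by
    calc c * ‖⟪T u, x⟫‖ ^ 2 = c * ‖⟪x, T u⟫‖ ^ 2 := by rw [hsymm]
      _ ≤ c * (RCLike.re ⟪x, T x⟫ * RCLike.re ⟪u, T u⟫) :=
          mul_le_mul_of_nonneg_left hcs hc
      _ = RCLike.re ⟪x, T x⟫ * (c * RCLike.re ⟪u, T u⟫) := by ring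
      _ ≤ RCLike.re ⟪x, T x⟫ * ‖T u‖ ^ 2 := mul_le_mul_of_nonneg_left hr hx0
  have hfin : c * ‖⟪w, x⟫‖ ^ 2 ≤ RCLike.re ⟪x, T x⟫ := by
    rw [hwx2]
    have h2 : (‖T u‖⁻¹)^2 * ‖T u‖ ^ 2 = 1 := by field_simp
    calc c * ((‖T u‖⁻¹) ^ 2 * ‖⟪T u, x⟫‖ ^ 2) = (‖T u‖⁻¹)^2 * (c * ‖⟪T u, x⟫‖ ^ 2) := by ring
      _ ≤ (‖T u‖⁻¹)^2 * (RCLike.re ⟪x, T x⟫ * ‖T u‖ ^ 2) := by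
          apply mul_le_mul_of_nonneg_left key (by positivity)
      _ = RCLike.re ⟪x, T x⟫ * ((‖T u‖⁻¹)^2 * ‖T u‖ ^ 2) := by ring
      _ = RCLike.re ⟪x, T x⟫ := by rw [h2, mul_one]
  linarith

lemma build (A : H →L[ℂ] H) (hA : A.IsPositive) (ξ : ℕ → ℝ)
    (inv : ℕ → (H →L[ℂ] H) → Prop) (hbase : inv 0 A)
    (hstep : ∀ n (T : H →L[ℂ] H), T.IsPositive → IsCompactOperator (⇑(A - T)) → inv n T →
      ∃ w : H, ‖w‖ = 1 ∧ (T - ξ n • rankOneProj w).IsPositive ∧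
        inv (n+1) (T - ξ n • rankOneProj w)) :
    ∃ P : ℕ → H →L[ℂ] H, (∀ j, IsRankOneProjection (P j)) ∧
      ∀ n, (A - ∑ j ∈ Finset.range n, ξ j • P j).IsPositive := by
  classical
  set Good : ℕ → (H →L[ℂ] H) → Prop :=
    fun n T => T.IsPositive ∧ IsCompactOperator (⇑(A - T)) ∧ inv n T with hGood
  have hstep' : ∀ n (T : H →L[ℂ] H), Good n T →
      ∃ w : H, ‖w‖ = 1 ∧ Good (n+1) (T - ξ n • rankOneProj w) := by
    intro n T hG
    obtain ⟨w, hw1, hw2, hw3⟩ := hstep n T hG.1 hG.2.1 hG.2.2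
    refine ⟨w, hw1, hw2, ?_, hw3⟩
    have h1 : IsCompactOperator (⇑(A - T) + (ξ n) • ⇑(rankOneProj w)) :=
      hG.2.1.add ((rankOneProj_compact w).smul (ξ n))
    convert h1 using 1
    funext x
    simp only [ContinuousLinearMap.sub_apply, ContinuousLinearMap.smul_apply,
      Pi.add_apply, Pi.smul_apply]
    abel
  have hbase' : Good 0 A := by
    refine ⟨hA, ?_, hbase⟩
    have : (⇑(A - A) : H → H) = fun _ => 0 := by funext x; simp
    rw [this]
    exact isCompactOperator_zero
  let G : ∀ n : ℕ, {T : H →L[ℂ] H // Good n T} := fun n =>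
    Nat.rec ⟨A, hbase'⟩
      (fun k p =>
        ⟨p.1 - ξ k • rankOneProj (Classical.choose (hstep' k p.1 p.2)),
          (Classical.choose_spec (hstep' k p.1 p.2)).2⟩) n
  set w : ℕ → H := fun n => Classical.choose (hstep' n (G n).1 (G n).2) with hwdef
  refine ⟨fun n => rankOneProj (w n), fun n =>
    ⟨w n, (Classical.choose_spec (hstep' n (G n).1 (G n).2)).1, rfl⟩, ?_⟩
  have hsum : ∀ n, (G n).1 = A - ∑ j ∈ Finset.range n, ξ j • rankOneProj (w j) := by
    intro n
    induction n with
    | zero => simp [G]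
    | succ k ih =>
      have hrec : (G (k+1)).1 = (G k).1 - ξ k • rankOneProj (w k) := rfl
      rw [hrec, ih, Finset.sum_range_succ]
      abel
  intro n
  have := (G n).2.1
  rwa [hsum n] at this

lemma limit_part (A : H →L[ℂ] H) (hA : A.IsPositive) (ξ : ℕ → ℝ) (hξ0 : ∀ j, 0 ≤ ξ j)
    (P : ℕ → H →L[ℂ] H) (hP : ∀ j, IsRankOneProjection (P j))
    (hpos : ∀ n, (A - ∑ j ∈ Finset.range n, ξ j • P j).IsPositive) :
    ∃ B : H →L[ℂ] H,
      (∀ x : H, Tendsto (fun n => ∑ j ∈ Finset.range n, ξ j • P j x) atTop (𝓝 (B x))) ∧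
      (A - B).IsPositive := by
  classical
  set S : ℕ → H →L[ℂ] H := fun n => ∑ j ∈ Finset.range n, ξ j • P j with hS
  have hterm : ∀ j, (ξ j • P j).IsPositive := by
    intro j
    obtain ⟨v, hv, hPv⟩ := hP j
    rw [hPv]
    exact smul_rankOneProj_isPositive (hξ0 j) v
  have hSpos : ∀ n, (S n).IsPositive := by
    intro n
    induction n with
    | zero => simpa [hS] using isPositive_zero
    | succ k ih =>
      have : S (k+1) = S k + ξ k • P k := by rw [hS]; exact Finset.sum_range_succ _ _
      rw [this]
      exact ih.add (hterm k)
  have hdiffpos : ∀ {n m : ℕ}, n ≤ m → (S m - S n).IsPositive := by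
    intro n m hnm
    induction m, hnm using Nat.le_induction with
    | base => simpa using isPositive_zero
    | succ k hk ih =>
      have : S (k+1) - S n = (S k - S n) + ξ k • P k := by
        have h1 : S (k+1) = S k + ξ k • P k := Finset.sum_range_succ _ _
        rw [h1]; abel
      rw [this]
      exact ih.add (hterm k)
  have hApos : ∀ n (x : H), RCLike.re ⟪x, S n x⟫ ≤ RCLike.re ⟪x, A x⟫ := by
    intro n x
    have h0 := (hpos n).re_inner_nonneg_right x
    have : RCLike.re ⟪x, (A - S n) x⟫ = RCLike.re ⟪x, A x⟫ - RCLike.re ⟪x, S n x⟫ := by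
      rw [ContinuousLinearMap.sub_apply, inner_sub_right, map_sub]
    linarith [this ▸ h0]
  have hdiffnorm : ∀ {n m : ℕ}, n ≤ m → ‖S m - S n‖ ≤ ‖A‖ := by
    intro n m hnm
    refine norm_le_of_form (hdiffpos hnm) (norm_nonneg A) (fun x => ?_)
    have h1 : RCLike.re ⟪x, (S m - S n) x⟫ = RCLike.re ⟪x, S m x⟫ - RCLike.re ⟪x, S n x⟫ := by
      rw [ContinuousLinearMap.sub_apply, inner_sub_right, map_sub]
    have h2 := hApos m x
    have h3 : 0 ≤ RCLike.re ⟪x, S n x⟫ := (hSpos n).re_inner_nonneg_right x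
    have h4 := form_le_norm A x
    linarith
  have hSnorm : ∀ n, ‖S n‖ ≤ ‖A‖ := by
    intro n
    have := hdiffnorm (Nat.zero_le n)
    have h0 : S n - S 0 = S n := by simp [hS]
    rwa [h0] at this
  -- convergence of the quadratic forms
  set F : ℕ → H → ℝ := fun n x => RCLike.re ⟪x, S n x⟫ with hF
  have hFmono : ∀ (x : H), Monotone (fun n => F n x) := by
    intro x n m hnm
    have h0 := (hdiffpos hnm).re_inner_nonneg_right x
    have h1 : RCLike.re ⟪x, (S m - S n) x⟫ = F m x - F n x := by
      rw [ContinuousLinearMap.sub_apply, inner_sub_right, map_sub]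
    simp only [hF]
    linarith [h1 ▸ h0]
  have hFcauchy : ∀ x : H, CauchySeq (fun n => F n x) := by
    intro x
    have hbdd : BddAbove (Set.range fun n => F n x) := by
      refine ⟨RCLike.re ⟪x, A x⟫, ?_⟩
      rintro r ⟨n, rfl⟩
      exact hApos n x
    exact (tendsto_atTop_ciSup (hFmono x) hbdd).cauchySeq
  -- Cauchy in H
  have hCauchy : ∀ x : H, CauchySeq (fun n => S n x) := by
    intro x
    rw [Metric.cauchySeq_iff']
    intro ε hε
    obtain ⟨N, hN⟩ := Metric.cauchySeq_iff'.1 (hFcauchy x) (ε^2/(‖A‖+1)) (by positivity)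
    refine ⟨N, fun n hn => ?_⟩
    have hd := hN n hn
    rw [Real.dist_eq, abs_of_nonneg (by linarith [hFmono x hn])] at hd
    have h1 : ‖(S n - S N) x‖ ^ 2 ≤ ‖S n - S N‖ * RCLike.re ⟪x, (S n - S N) x⟫ :=
      norm_sq_apply_le (hdiffpos hn) x
    have h2 : RCLike.re ⟪x, (S n - S N) x⟫ = F n x - F N x := by
      rw [ContinuousLinearMap.sub_apply, inner_sub_right, map_sub]
    have h3 : 0 ≤ F n x - F N x := by linarith [hFmono x hn]
    have h4 : ‖(S n - S N) x‖ ^ 2 ≤ ‖A‖ * (F n x - F N x) := by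
      calc ‖(S n - S N) x‖ ^ 2 ≤ ‖S n - S N‖ * RCLike.re ⟪x, (S n - S N) x⟫ := h1
        _ ≤ ‖A‖ * (F n x - F N x) := by
            rw [h2]
            exact mul_le_mul_of_nonneg_right (hdiffnorm hn) h3
    have h5 : ‖(S n - S N) x‖ ^ 2 < ε ^ 2 := by
      have hA0 : (0:ℝ) ≤ ‖A‖ := norm_nonneg A
      have hη : (0:ℝ) < ε^2/(‖A‖+1) := by positivity
      calc ‖(S n - S N) x‖ ^ 2 ≤ ‖A‖ * (F n x - F N x) := h4
        _ ≤ ‖A‖ * (ε^2/(‖A‖+1)) := mul_le_mul_of_nonneg_left hd.le hA0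
        _ < ε ^ 2 := by
            have h7 : (‖A‖+1) * (ε^2/(‖A‖+1)) = ε^2 := by field_simp
            nlinarith
    have h6 : (S n - S N) x = S n x - S N x := rfl
    rw [dist_eq_norm]
    rw [h6] at h5
    nlinarith [norm_nonneg (S n x - S N x), hε]
  have hex : ∀ x : H, ∃ y : H, Tendsto (fun n => S n x) atTop (𝓝 y) :=
    fun x => cauchySeq_tendsto_of_complete (hCauchy x)
  choose Bf hBf using hex
  -- B as a continuous linear map
  have hBadd : ∀ x y : H, Bf (x + y) = Bf x + Bf y := by
    intro x y
    have h1 : (fun n => S n (x + y)) = fun n => S n x + S n y := by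
      funext n; exact map_add _ _ _
    exact tendsto_nhds_unique (h1 ▸ hBf (x+y)) ((hBf x).add (hBf y))
  have hBsmul : ∀ (c : ℂ) (x : H), Bf (c • x) = c • Bf x := by
    intro c x
    have h1 : (fun n => S n (c • x)) = fun n => c • S n x := by
      funext n; exact map_smul _ _ _
    exact tendsto_nhds_unique (h1 ▸ hBf (c • x)) ((hBf x).const_smul c)
  have hBbound : ∀ x : H, ‖Bf x‖ ≤ ‖A‖ * ‖x‖ := by
    intro x
    refine le_of_tendsto (hBf x).norm (Eventually.of_forall (fun n => ?_))
    calc ‖S n x‖ ≤ ‖S n‖ * ‖x‖ := (S n).le_opNorm x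
      _ ≤ ‖A‖ * ‖x‖ := mul_le_mul_of_nonneg_right (hSnorm n) (norm_nonneg x)
  set B : H →L[ℂ] H := LinearMap.mkContinuous
    { toFun := Bf, map_add' := hBadd, map_smul' := hBsmul } ‖A‖ hBbound with hB
  have hBapp : ∀ x, B x = Bf x := fun x => rfl
  refine ⟨B, ?_, ?_⟩
  · intro x
    have h1 : (fun n => ∑ j ∈ Finset.range n, ξ j • P j x) = fun n => S n x := by
      funext n
      rw [hS]
      simp [ContinuousLinearMap.sum_apply]
    rw [h1, hBapp]
    exact hBf x
  · constructor
    · intro x y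
      have hAs := hA.1
      have hSs : ∀ n, ⟪S n x, y⟫ = ⟪x, S n y⟫ :=
        fun n => (hSpos n).1 x y
      have hBs : ⟪Bf x, y⟫ = ⟪x, Bf y⟫ := by
        have t1 : Tendsto (fun n => ⟪S n x, y⟫) atTop (𝓝 ⟪Bf x, y⟫) :=
          (hBf x).inner tendsto_const_nhds
        have t2 : Tendsto (fun n => ⟪x, S n y⟫) atTop (𝓝 ⟪x, Bf y⟫) :=
          tendsto_const_nhds.inner (hBf y)
        have : (fun n => ⟪S n x, y⟫) = fun n => ⟪x, S n y⟫ := funext hSs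
        exact tendsto_nhds_unique (this ▸ t1) t2
      show ⟪(A - B) x, y⟫ = ⟪x, (A - B) y⟫
      rw [ContinuousLinearMap.sub_apply, ContinuousLinearMap.sub_apply,
        inner_sub_left, inner_sub_right, hBapp, hBapp, hBs,
        show (⟪A x, y⟫ : ℂ) = ⟪x, A y⟫ from hAs x y]
    · intro x
      rw [reApplyInnerSelf]
      have t1 : Tendsto (fun n => RCLike.re ⟪(A - S n) x, x⟫) atTop
          (𝓝 (RCLike.re ⟪(A - B) x, x⟫)) := by
        have ht : Tendsto (fun n => (A - S n) x) atTop (𝓝 ((A - B) x)) :=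
          (hBf x).const_sub (A x)
        exact (RCLike.continuous_re.tendsto _).comp (ht.inner tendsto_const_nhds)
      exact ge_of_tendsto t1 (Eventually.of_forall (fun n => (hpos n).2 x))

lemma step_case2 (A : H →L[ℂ] H) (hnc : ¬ IsCompactOperator (⇑A))
    {c : ℝ} (hc0 : 0 ≤ c) (hcm : c < essNorm A)
    (T : H →L[ℂ] H) (hT : T.IsPositive) (hcpt : IsCompactOperator (⇑(A - T))) :
    ∃ w : H, ‖w‖ = 1 ∧ (T - c • rankOneProj w).IsPositive := by
  set m := essNorm A with hm
  have hm0 : 0 < m := essNorm_pos A hnc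
  set ε : ℝ := (m - c)/2 with hε
  have hε0 : 0 < ε := by simp only [hε]; linarith
  have hεm : ε ≤ m := by simp only [hε]; linarith
  obtain ⟨u, hu1, _, hu3⟩ := exists_unit_perp A T hcpt (⊥ : Submodule ℂ H) hε0 hεm
  have hcu : c < ‖T u‖ := by
    have : m - ε = (m + c)/2 := by simp only [hε]; ring
    rw [this] at hu3
    linarith
  have hTu : T u ≠ 0 := by
    intro h0
    rw [h0, norm_zero] at hcu
    linarith
  have hre : RCLike.re ⟪u, T u⟫ ≤ ‖T u‖ := by
    calc RCLike.re ⟪u, T u⟫ ≤ ‖⟪u, T u⟫‖ := RCLike.re_le_norm _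
      _ ≤ ‖u‖ * ‖T u‖ := norm_inner_le_norm _ _
      _ = ‖T u‖ := by rw [hu1, one_mul]
  have hre0 : 0 ≤ RCLike.re ⟪u, T u⟫ := hT.re_inner_nonneg_right u
  have hr : c * RCLike.re ⟪u, T u⟫ ≤ ‖T u‖ ^ 2 := by
    have p1 : c * RCLike.re ⟪u, T u⟫ ≤ c * ‖T u‖ := mul_le_mul_of_nonneg_left hre hc0
    have p2 : c * ‖T u‖ ≤ ‖T u‖ * ‖T u‖ := mul_le_mul_of_nonneg_right hcu.le (norm_nonneg _)
    nlinarith only [p1, p2]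
  obtain ⟨hw1, hw2⟩ := step_of_ratio hT hTu hc0 hr
  exact ⟨_, hw1, hw2⟩

lemma step_case1 (A : H →L[ℂ] H) (hnc : ¬ IsCompactOperator (⇑A))
    (x₀ : H) (hx₀ : ‖x₀‖ = 1) (hD0 : essNorm A < RCLike.re ⟪x₀, A x₀⟫)
    {c : ℝ} (hc0 : 0 ≤ c) (hcm : c ≤ essNorm A) (n : ℕ)
    (T : H →L[ℂ] H) (hT : T.IsPositive) (hcpt : IsCompactOperator (⇑(A - T)))
    (hinv : essNorm A + (RCLike.re ⟪x₀, A x₀⟫ - essNorm A)/2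
        + (RCLike.re ⟪x₀, A x₀⟫ - essNorm A)/2^(n+1) ≤ RCLike.re ⟪x₀, T x₀⟫) :
    ∃ w : H, ‖w‖ = 1 ∧ (T - c • rankOneProj w).IsPositive ∧
      essNorm A + (RCLike.re ⟪x₀, A x₀⟫ - essNorm A)/2
        + (RCLike.re ⟪x₀, A x₀⟫ - essNorm A)/2^(n+2)
        ≤ RCLike.re ⟪x₀, (T - c • rankOneProj w) x₀⟫ := by
  classical
  set m := essNorm A with hmdef
  have hm0 : 0 < m := essNorm_pos A hnc
  set d : ℝ := RCLike.re ⟪x₀, A x₀⟫ - m with hddef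
  have hd0 : 0 < d := by simp only [hddef]; linarith
  set D : ℝ := RCLike.re ⟪x₀, T x₀⟫ with hDdef
  have hp1 : (0:ℝ) < d/2^(n+1) := by positivity
  have hp2 : (0:ℝ) < d/2^(n+2) := by positivity
  have hmD : m < D := by
    have := hinv
    linarith
  have hD0' : 0 < D := lt_trans hm0 hmD
  set δ : ℝ := d/2^(n+2) with hδdef
  have hδ0 : 0 < δ := hp2
  set s2 : ℝ := 4*D^2/(m*δ) with hs2def
  have hs20 : 0 < s2 := by positivity
  set s : ℝ := Real.sqrt s2 with hsdef
  have hs2eq : s^2 = s2 := Real.sq_sqrt hs20.le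
  set dbar : ℝ := D - m with hdbardef
  have hdbar0 : 0 < dbar := by simp only [hdbardef]; linarith
  set ε : ℝ := min (m/2) (dbar/(s2+1)) with hεdef
  have hε0 : 0 < ε := lt_min (by linarith) (by positivity)
  have hεm2 : ε ≤ m/2 := min_le_left _ _
  have hεm : ε ≤ m := by linarith
  have hεs : s2 * ε ≤ dbar := by
    have h1 : ε ≤ dbar/(s2+1) := min_le_right _ _
    have h2 : ε * (s2+1) ≤ dbar := by
      rw [← le_div_iff₀ (by positivity)]
      exact h1
    have h3 : s2 * ε = ε * (s2+1) - ε := by ring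
    linarith only [h2, h3, hε0]
  -- the finite-dimensional subspace to avoid
  set SP : Submodule ℂ H := Submodule.span ℂ ({T x₀, T (T x₀)} : Set H) with hSP
  have : FiniteDimensional ℂ SP :=
    FiniteDimensional.span_of_finite ℂ ((Set.finite_singleton _).insert _)
  obtain ⟨e, he1, he2, he3⟩ := exists_unit_perp A T hcpt SP hε0 hεm
  have hoe1 : ⟪T x₀, e⟫ = 0 :=
    (Submodule.mem_orthogonal SP e).1 he2 _ (Submodule.subset_span (by simp))
  have hoe2 : ⟪T (T x₀), e⟫ = 0 :=
    (Submodule.mem_orthogonal SP e).1 he2 _ (Submodule.subset_span (by simp))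
  have hsym : ∀ a b : H, ⟪T a, b⟫ = ⟪a, T b⟫ := hT.1
  set u : H := x₀ + (s:ℂ) • e with hudef
  have hTu : T u = T x₀ + (s:ℂ) • T e := by rw [hudef, map_add, map_smul]
  -- inner products
  have hx₀Te : ⟪x₀, T e⟫ = 0 := by rw [← hsym]; exact hoe1
  have heTx₀ : ⟪e, T x₀⟫ = 0 := by
    rw [← inner_conj_symm, hoe1]; simp
  have hTex₀ : ⟪T e, x₀⟫ = 0 := by rw [hsym]; exact heTx₀
  have hTx₀Te : ⟪T x₀, T e⟫ = 0 := by rw [← hsym]; exact hoe2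
  have ha_eq : RCLike.re ⟪u, T u⟫ = D + s^2 * RCLike.re ⟪e, T e⟫ := by
    rw [hudef, hTu]
    rw [inner_add_left, inner_add_right, inner_add_right, inner_smul_left, inner_smul_right,
      inner_smul_left, inner_smul_right, hx₀Te, heTx₀]
    simp only [mul_zero, add_zero, zero_add, Complex.conj_ofReal]
    rw [← mul_assoc, ← Complex.ofReal_mul, ← sq]
    rw [map_add, re_real_mul]
  have hb_eq : ‖T u‖^2 = ‖T x₀‖^2 + s^2 * ‖T e‖^2 := by
    rw [hTu, norm_add_sq (𝕜 := ℂ)]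
    rw [inner_smul_right, hTx₀Te, mul_zero]
    rw [norm_smul, Complex.norm_real, Real.norm_eq_abs, abs_of_nonneg (Real.sqrt_nonneg _)]
    simp only [map_zero, mul_zero, add_zero]
    ring
  -- bounds
  have hre_e : RCLike.re ⟪e, T e⟫ ≤ ‖T e‖ := by
    calc RCLike.re ⟪e, T e⟫ ≤ ‖⟪e, T e⟫‖ := RCLike.re_le_norm _
      _ ≤ ‖e‖ * ‖T e‖ := norm_inner_le_norm _ _
      _ = ‖T e‖ := by rw [he1, one_mul]
  have hTe_low : m - ε < ‖T e‖ := he3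
  have hTe0 : 0 ≤ ‖T e‖ := norm_nonneg _
  have hTx₀_low : D ≤ ‖T x₀‖ := by
    calc D = RCLike.re ⟪x₀, T x₀⟫ := hDdef
      _ ≤ ‖⟪x₀, T x₀⟫‖ := RCLike.re_le_norm _
      _ ≤ ‖x₀‖ * ‖T x₀‖ := norm_inner_le_norm _ _
      _ = ‖T x₀‖ := by rw [hx₀, one_mul]
  have hkey1 : m * RCLike.re ⟪e, T e⟫ ≤ ‖T e‖^2 + ε * m := by
    have p1 : m * RCLike.re ⟪e, T e⟫ ≤ m * ‖T e‖ := mul_le_mul_of_nonneg_left hre_e hm0.le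
    rcases le_or_gt m ‖T e‖ with h | h
    · have p2 : m * ‖T e‖ ≤ ‖T e‖ * ‖T e‖ := mul_le_mul_of_nonneg_right h hTe0
      nlinarith only [p1, p2, mul_nonneg hε0.le hm0.le]
    · have p3 : m - ‖T e‖ < ε := by linarith only [hTe_low]
      have p4 : (m - ‖T e‖) * ‖T e‖ ≤ ε * ‖T e‖ := mul_le_mul_of_nonneg_right p3.le hTe0
      have p5 : ε * ‖T e‖ ≤ ε * m := mul_le_mul_of_nonneg_left h.le hε0.le
      nlinarith only [p1, p4, p5]
  have ha0 : 0 ≤ RCLike.re ⟪u, T u⟫ := hT.re_inner_nonneg_right u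
  have hma : m * RCLike.re ⟪u, T u⟫ ≤ ‖T u‖^2 := by
    rw [ha_eq, hb_eq, hs2eq]
    have h1 : s2 * (m * RCLike.re ⟪e, T e⟫) ≤ s2 * (‖T e‖^2 + ε * m) :=
      mul_le_mul_of_nonneg_left hkey1 hs20.le
    have h2 : D^2 ≤ ‖T x₀‖^2 := by
      have := mul_le_mul hTx₀_low hTx₀_low hD0'.le (norm_nonneg _)
      nlinarith only [this]
    have h3 : s2 * ε * m ≤ dbar * m := mul_le_mul_of_nonneg_right hεs hm0.le
    have h4 : dbar * m ≤ dbar * D := mul_le_mul_of_nonneg_left hmD.le hdbar0.le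
    have h5 : m * D = D^2 - D * dbar := by rw [hdbardef]; ring
    nlinarith only [h1, h2, h3, h4, h5]
  have hratio : c * RCLike.re ⟪u, T u⟫ ≤ ‖T u‖^2 := by
    have := mul_le_mul_of_nonneg_right hcm ha0
    linarith
  have hTu2pos : 0 < ‖T u‖^2 := by
    rw [hb_eq]
    have h2 : D^2 ≤ ‖T x₀‖^2 := by
      have := mul_le_mul hTx₀_low hTx₀_low hD0'.le (norm_nonneg _)
      nlinarith only [this]
    nlinarith only [h2, pow_pos hD0' 2, mul_nonneg (sq_nonneg s) (sq_nonneg ‖T e‖)]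
  have hTune : T u ≠ 0 := by
    intro h0
    rw [h0, norm_zero] at hTu2pos
    simp at hTu2pos
  obtain ⟨hw1, hw2⟩ := step_of_ratio hT hTune hc0 hratio
  set w : H := ((‖T u‖⁻¹ : ℝ) : ℂ) • T u with hwdef
  refine ⟨w, hw1, hw2, ?_⟩
  -- the invariant
  have hTux₀ : ⟪T u, x₀⟫ = ((D:ℝ) : ℂ) := by
    rw [hTu, inner_add_left, inner_smul_left, hTex₀, mul_zero, add_zero]
    -- ⟪T x₀, x₀⟫ is real and equals D
    have hre : RCLike.re ⟪T x₀, x₀⟫ = D := by rw [inner_re_symm]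
    have hconj : (starRingEnd ℂ) ⟪T x₀, x₀⟫ = ⟪T x₀, x₀⟫ := by
      rw [inner_conj_symm]
      exact (hsym x₀ x₀).symm
    rw [Complex.conj_eq_iff_re] at hconj
    rw [← hconj]
    have hre' : ⟪T x₀, x₀⟫.re = D := hre
    rw [hre']
  have hwx₀ : ‖⟪w, x₀⟫‖^2 = D^2 / ‖T u‖^2 := by
    rw [hwdef, inner_smul_left, Complex.conj_ofReal, hTux₀]
    rw [norm_mul, Complex.norm_real, Real.norm_eq_abs, abs_of_nonneg (inv_nonneg.2 (norm_nonneg _)),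
      Complex.norm_real, Real.norm_eq_abs, abs_of_nonneg hD0'.le]
    rw [mul_pow]
    rw [div_eq_mul_inv]
    ring_nf
  have hloss : c * ‖⟪w, x₀⟫‖^2 ≤ δ := by
    rw [hwx₀]
    have hb_lb : s2 * (m/2)^2 ≤ ‖T u‖^2 := by
      rw [hb_eq, hs2eq]
      have hhalf : m/2 ≤ ‖T e‖ := by linarith only [hTe_low, hεm2]
      have h1 : (m/2)^2 ≤ ‖T e‖^2 := by
        have := mul_le_mul hhalf hhalf (by linarith only [hm0] : (0:ℝ) ≤ m/2) hTe0
        nlinarith only [this]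
      have h2 : s2 * (m/2)^2 ≤ s2 * ‖T e‖^2 := mul_le_mul_of_nonneg_left h1 hs20.le
      nlinarith only [h2, sq_nonneg ‖T x₀‖]
    have hmb : 0 < s2 * (m/2)^2 := by positivity
    have h2 : c * (D^2/‖T u‖^2) ≤ m * (D^2/‖T u‖^2) := by
      apply mul_le_mul_of_nonneg_right hcm
      positivity
    have h3 : m * (D^2/‖T u‖^2) ≤ m * (D^2/(s2 * (m/2)^2)) := by
      apply mul_le_mul_of_nonneg_left _ hm0.le
      exact div_le_div_of_nonneg_left (sq_nonneg D) hmb hb_lb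
    have h4 : m * (D^2/(s2 * (m/2)^2)) = δ := by
      rw [hs2def]
      field_simp
      ring
    linarith
  have hform : RCLike.re ⟪x₀, (T - c • rankOneProj w) x₀⟫
      = D - c * ‖⟪w, x₀⟫‖^2 := by
    rw [ContinuousLinearMap.sub_apply, inner_sub_right, map_sub, smul_form,
      rankOneProj_form, hDdef]
  rw [hform]
  have hpow : (2:ℝ)^(n+2) = 2^(n+1) * 2 := by ring
  have hstep : d/2^(n+1) - d/2^(n+2) = d/2^(n+2) := by
    rw [hpow]
    field_simp
    ring
  have hd2 : δ = d/2^(n+2) := hδdef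
  have hDlb : m + d/2 + d/2^(n+1) ≤ D := hinv
  linarith

end aux

theorem stmt19 [CompleteSpace H] (A : H →L[ℂ] H) (hA : A.IsPositive)
    (hnc : ¬ IsCompactOperator (A : H →L[ℂ] H))
    (ξ : ℕ → ℝ) (hξ : ∀ j, 0 ≤ ξ j ∧ ξ j ≤ essNorm A ∧ ξ j < ‖A‖) :
    ∃ (P : ℕ → H →L[ℂ] H) (B : H →L[ℂ] H), (∀ j, IsRankOneProjection (P j)) ∧
      (∀ x : H, Filter.Tendsto (fun n => ∑ j ∈ Finset.range n, ξ j • P j x)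
        Filter.atTop (nhds (B x))) ∧
      (A - B).IsPositive := by
  classical
  have hnc' : ¬ IsCompactOperator (⇑A) := hnc
  have main : ∃ P : ℕ → H →L[ℂ] H, (∀ j, IsRankOneProjection (P j)) ∧
      ∀ n, (A - ∑ j ∈ Finset.range n, ξ j • P j).IsPositive := by
    by_cases hcase : ∃ x₀ : H, ‖x₀‖ = 1 ∧ essNorm A < RCLike.re ⟪x₀, A x₀⟫
    · obtain ⟨x₀, hx₀, hD0⟩ := hcase
      refine build A hA ξ
        (fun n T => essNorm A + (RCLike.re ⟪x₀, A x₀⟫ - essNorm A)/2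
          + (RCLike.re ⟪x₀, A x₀⟫ - essNorm A)/2^(n+1) ≤ RCLike.re ⟪x₀, T x₀⟫)
        ?_ ?_
      · show essNorm A + (RCLike.re ⟪x₀, A x₀⟫ - essNorm A)/2
            + (RCLike.re ⟪x₀, A x₀⟫ - essNorm A)/2^(0+1) ≤ RCLike.re ⟪x₀, A x₀⟫
        have h2 : (2:ℝ)^(0+1) = 2 := by norm_num
        rw [h2]
        linarith
      · intro n T hT hcpt hinv
        exact step_case1 A hnc' x₀ hx₀ hD0 (hξ n).1 (hξ n).2.1 n T hT hcpt hinv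
    · push_neg at hcase
      have hAform : ∀ x : H, RCLike.re ⟪x, A x⟫ ≤ essNorm A * ‖x‖ ^ 2 := by
        intro x
        rcases eq_or_ne x 0 with rfl | hx0
        · simp
        · have hnx : (0:ℝ) < ‖x‖ := norm_pos_iff.2 hx0
          set u : H := ((‖x‖⁻¹ : ℝ) : ℂ) • x with hu
          have hun : ‖u‖ = 1 := by
            rw [hu, norm_smul, Complex.norm_real, Real.norm_eq_abs,
              abs_of_nonneg (inv_nonneg.2 hnx.le), inv_mul_cancel₀ hnx.ne']
          have h1 := hcase u hun
          have h2 : ⟪u, A u⟫ = (((‖x‖⁻¹)^2 : ℝ) : ℂ) * ⟪x, A x⟫ := by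
            rw [hu, map_smul, inner_smul_left, inner_smul_right, Complex.conj_ofReal,
              ← mul_assoc, ← Complex.ofReal_mul, ← sq]
          rw [h2, re_real_mul] at h1
          have h3 : (‖x‖⁻¹)^2 * RCLike.re ⟪x, A x⟫ ≤ essNorm A := h1
          have h5 := mul_le_mul_of_nonneg_right h3 (sq_nonneg ‖x‖)
          have h6 : ‖x‖⁻¹ ^ 2 * RCLike.re ⟪x, A x⟫ * ‖x‖ ^ 2 = RCLike.re ⟪x, A x⟫ := by
            field_simp
          linarith only [h5, h6]
      have hnormle : ‖A‖ ≤ essNorm A := norm_le_of_form hA (essNorm_nonneg A) hAform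
      refine build A hA ξ (fun _ _ => True) trivial ?_
      intro n T hT hcpt _
      obtain ⟨w, hw1, hw2⟩ := step_case2 A hnc' (hξ n).1
        (lt_of_lt_of_le (hξ n).2.2 hnormle) T hT hcpt
      exact ⟨w, hw1, hw2, trivial⟩
  obtain ⟨P, hP, hpos⟩ := main
  obtain ⟨B, hB1, hB2⟩ := limit_part A hA ξ (fun j => (hξ j).1) P hP hpos
  exact ⟨P, B, hP, hB1, hB2⟩
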